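/- (Medium gap case.) Assume μ_1 ≥ μ_2 and condition on the intersection W of the four good events W1–W4 of the three-level policy. If the gap Δ = μ_1 − μ_2 satisfies 4·Σ_{a∈{1,2}} √(log(T)/(σ·q_a·T1)) ≤ Δ ≤ 4·Σ_{a∈{1,2}} √(log(T)/(q_a·T1)), then all agents in the third level pull arm 1. -/

import Mathlib

open MeasureTheory ProbabilityTheory

noncomputable section

namespace IncExp

/-- Number of pulls of arm `a` among the rounds in `S`. -/
def pullCount {Ω : Type} {K : ℕ} (A : ℕ → Ω → Fin K) (S : Finset ℕ) (a : Fin K) (ω : Ω) : ℕ :=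
  (S.filter fun s => A s ω = a).card

/-- Empirical mean reward of arm `a` among the rounds in `S`. -/
def empMean {Ω : Type} {K : ℕ} (A : ℕ → Ω → Fin K) (r : ℕ → Ω → ℝ)
    (S : Finset ℕ) (a : Fin K) (ω : Ω) : ℝ :=
  (∑ s ∈ S.filter (fun s => A s ω = a), r s ω) / (pullCount A S a ω : ℝ)

/-- Index of round `t` among the pulls of arm `a` within the rounds `S`:
the number of pulls of `a` in `S` strictly before round `t`. -/
def idxIn {Ω : Type} {K : ℕ} (A : ℕ → Ω → Fin K) (S : Finset ℕ) (a : Fin K) (ω : Ω) (t : ℕ) : ℕ :=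
  pullCount A (S.filter fun s => s < t) a ω

/-- The rounds of `S` carrying the `m`-th (inclusive) through `n`-th (exclusive)
pulls of arm `a` within `S`. -/
def window {Ω : Type} {K : ℕ} (A : ℕ → Ω → Fin K) (S : Finset ℕ) (a : Fin K) (ω : Ω)
    (m n : ℕ) : Finset ℕ :=
  S.filter fun t => A t ω = a ∧ m ≤ idxIn A S a ω t ∧ idxIn A S a ω t < n

/-- The rounds of `S` carrying the first `n` pulls of arm `a` within `S`. -/
def firstPulls {Ω : Type} {K : ℕ} (A : ℕ → Ω → Fin K) (S : Finset ℕ) (a : Fin K) (ω : Ω)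
    (n : ℕ) : Finset ℕ :=
  window A S a ω 0 n

/-- Average reward over a set `W` of rounds. -/
def meanOver {Ω : Type} (r : ℕ → Ω → ℝ) (W : Finset ℕ) (ω : Ω) : ℝ :=
  (∑ t ∈ W, r t ω) / (W.card : ℝ)

/-- An execution of the social-learning bandit process with `K` arms, `T` rounds,
an order-based disclosure policy given by the observation sets `obs`, and agents
responding according to Assumption 1 (with constants `Nest` and `C_est = 1/16`).
Rewards are Bernoulli, read off an i.i.d. reward tape. -/
structure Execution (Ω : Type) [MeasureSpace Ω] (K T Nest : ℕ) where
  /-- the mean rewards -/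
  μ : Fin K → ℝ
  μ_mem : ∀ a, μ a ∈ Set.Icc (1/3 : ℝ) (2/3 : ℝ)
  /-- the subset of past rounds disclosed to agent `t` (fixed in advance) -/
  obs : ℕ → Finset ℕ
  obs_lt : ∀ t, ∀ s ∈ obs t, s < t
  /-- the arm pulled by agent `t` -/
  A : ℕ → Ω → Fin K
  A_meas : ∀ t, Measurable (A t)
  /-- the reward collected at round `t` -/
  r : ℕ → Ω → ℝ
  /-- the reward tape: cell `(a, j)` is the reward of the `j`-th pull of arm `a` -/
  tape : Fin K → ℕ → Ω → ℝ
  tape_meas : ∀ a j, Measurable (tape a j)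
  tape01 : ∀ a j ω, tape a j ω = 0 ∨ tape a j ω = 1
  tape_dist : ∀ a j, volume {ω | tape a j ω = 1} = ENNReal.ofReal (μ a)
  tape_indep : iIndepFun (m := fun _ => inferInstance)
    (fun p : Fin K × ℕ => fun ω => tape p.1 p.2 ω) volume
  r_eq : ∀ t ω, r t ω = tape (A t ω) (pullCount A (Finset.range t) (A t ω) ω) ω
  /-- the reward estimates formed by agent `t` -/
  est : ℕ → Fin K → Ω → ℝ
  est_close : ∀ t a ω, Nest ≤ pullCount A (obs t) a ω →
      |est t a ω - empMean A r (obs t) a ω| < (1/16 : ℝ) / Real.sqrt (pullCount A (obs t) a ω)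
  est_zero : ∀ t a ω, pullCount A (obs t) a ω = 0 → (1/3 : ℝ) ≤ est t a ω
  /-- each agent pulls an arm maximizing its estimate -/
  A_max : ∀ t ω a, est t a ω ≤ est t (A t ω) ω

/-- Regret of an execution. -/
def regret {Ω : Type} [MeasureSpace Ω] {K T Nest : ℕ} (e : Execution Ω K T Nest) : ℝ :=
  (T : ℝ) * (⨆ a, e.μ a) - ∑ t ∈ Finset.range T, ∫ ω, e.μ (e.A t ω)

/-- `S` is a full-disclosure path: every agent in `S` observes exactly the full
history of the preceding rounds of `S`. -/
def IsFDPath (obs : ℕ → Finset ℕ) (S : Finset ℕ) : Prop :=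
  ∀ t ∈ S, obs t = S.filter fun s => s < t

/-- The `s`-th first-level group of the three-level policy: `T1` full-disclosure
paths of `Lfdp` rounds each. -/
def grp (T1 Lfdp s : ℕ) : Finset ℕ :=
  Finset.Ico (s * T1 * Lfdp) ((s + 1) * T1 * Lfdp)

/-- The three-level policy with parameters `σ, T1, T2, Lfdp`:
level 1 consists of `σ` groups of `T1` full-disclosure paths of length `Lfdp` each;
level 2 consists of `σ` groups of `T2` agents, each agent of the `s`-th second-level
group observing exactly the history of the `s`-th first-level group;
every agent of level 3 (all remaining rounds) observes exactly the full history of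
the first two levels. -/
def ThreeLevel (obs : ℕ → Finset ℕ) (σ T1 T2 Lfdp : ℕ) : Prop :=
  (∀ j < σ * T1, IsFDPath obs (Finset.Ico (j * Lfdp) ((j + 1) * Lfdp))) ∧
  (∀ s < σ, ∀ t ∈ Finset.Ico (σ * T1 * Lfdp + s * T2) (σ * T1 * Lfdp + (s + 1) * T2),
      obs t = grp T1 Lfdp s) ∧
  (∀ t, σ * T1 * Lfdp + σ * T2 ≤ t → obs t = Finset.range (σ * T1 * Lfdp + σ * T2))

/-- The parameter `σ = 2^10 * log T` of the three-level policy. -/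
def sigT (T : ℕ) : ℕ := ⌈(2:ℝ)^(10:ℕ) * Real.log T⌉₊

/-- The parameter `T1 = T^(4/7) * (log T)^(-1/7)` of the three-level policy. -/
def T1of (T : ℕ) : ℕ := ⌈(T : ℝ) ^ ((4:ℝ)/7) * (Real.log T) ^ (-(1:ℝ)/7)⌉₊

/-- The parameter `T2 = T^(6/7) * (log T)^(-5/7)` of the three-level policy. -/
def T2of (T : ℕ) : ℕ := ⌈(T : ℝ) ^ ((6:ℝ)/7) * (Real.log T) ^ (-(5:ℝ)/7)⌉₊

lemma pullCount_mono {Ω : Type} {K : ℕ} (A : ℕ → Ω → Fin K) {S S' : Finset ℕ} (h : S ⊆ S')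
    (a : Fin K) (ω : Ω) : pullCount A S a ω ≤ pullCount A S' a ω :=
  Finset.card_le_card (Finset.filter_subset_filter _ h)

lemma pullCount_range_succ {Ω : Type} {K : ℕ} (A : ℕ → Ω → Fin K) {a : Fin K} {ω : Ω} {t : ℕ}
    (h : A t ω = a) :
    pullCount A (Finset.range (t + 1)) a ω = pullCount A (Finset.range t) a ω + 1 := by
  unfold pullCount
  rw [Finset.range_add_one, Finset.filter_insert, if_pos h,
    Finset.card_insert_of_notMem (by simp)]

lemma pullCount_Ico_add {Ω : Type} {K : ℕ} (A : ℕ → Ω → Fin K) (a : Fin K) (ω : Ω)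
    {m n k : ℕ} (h1 : m ≤ n) (h2 : n ≤ k) :
    pullCount A (Finset.Ico m k) a ω
      = pullCount A (Finset.Ico m n) a ω + pullCount A (Finset.Ico n k) a ω := by
  unfold pullCount
  rw [← Finset.Ico_union_Ico_eq_Ico h1 h2, Finset.filter_union,
    Finset.card_union_of_disjoint
      (Finset.disjoint_filter_filter (Finset.Ico_disjoint_Ico_consecutive m n k))]

lemma pullCount_grp_sum {Ω : Type} {K : ℕ} (A : ℕ → Ω → Fin K) (a : Fin K) (ω : Ω)
    (T1 Lfdp σ : ℕ) :
    ∑ s ∈ Finset.range σ, pullCount A (grp T1 Lfdp s) a ω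
      = pullCount A (Finset.range (σ * T1 * Lfdp)) a ω := by
  induction σ with
  | zero => simp [pullCount]
  | succ n ih =>
    rw [Finset.sum_range_succ, ih, Finset.range_eq_Ico, Finset.range_eq_Ico,
      pullCount_Ico_add A a ω (Nat.zero_le (n * T1 * Lfdp))
        (Nat.mul_le_mul_right _ (Nat.mul_le_mul_right _ (Nat.le_add_right n 1)))]
    rfl

lemma eventually_rpow_log {K1 : ℝ} (hK : 0 < K1) :
    ∀ᶠ x : ℝ in Filter.atTop,
      K1 * Real.log x ≤ x ^ ((4:ℝ)/7) * (Real.log x) ^ (-(1:ℝ)/7) := by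
  have h := (isLittleO_log_rpow_rpow_atTop ((8:ℝ)/7)
      (show (0:ℝ) < (4:ℝ)/7 by norm_num)).def (show (0:ℝ) < 1/K1 by positivity)
  filter_upwards [h, Real.tendsto_log_atTop.eventually_ge_atTop 1,
    Filter.eventually_ge_atTop (1:ℝ)] with x hx hlog hx1
  have hlogpos : 0 < Real.log x := lt_of_lt_of_le one_pos hlog
  have hxpos : (0:ℝ) < x := lt_of_lt_of_le one_pos hx1
  have h8 : (Real.log x) ^ ((8:ℝ)/7) ≤ (1/K1) * x ^ ((4:ℝ)/7) := by
    have := hx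
    rwa [Real.norm_eq_abs, Real.norm_eq_abs,
      abs_of_nonneg (Real.rpow_nonneg hlogpos.le _),
      abs_of_nonneg (Real.rpow_nonneg hxpos.le _)] at this
  have hsplit : (Real.log x) ^ ((8:ℝ)/7)
      = Real.log x * (Real.log x) ^ ((1:ℝ)/7) := by
    rw [show ((8:ℝ)/7) = 1 + (1:ℝ)/7 by norm_num, Real.rpow_add hlogpos, Real.rpow_one]
  have hp : (0:ℝ) < (Real.log x) ^ ((1:ℝ)/7) := Real.rpow_pos_of_pos hlogpos _
  rw [show (-(1:ℝ)/7) = -((1:ℝ)/7) by norm_num, Real.rpow_neg hlogpos.le,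
    ← div_eq_mul_inv, le_div_iff₀ hp]
  rw [hsplit] at h8
  have : K1 * (Real.log x * (Real.log x) ^ ((1:ℝ)/7)) ≤ x ^ ((4:ℝ)/7) := by
    rw [← le_div_iff₀' hK]
    calc Real.log x * Real.log x ^ ((1:ℝ)/7) ≤ (1/K1) * x ^ ((4:ℝ)/7) := by linarith
      _ = x ^ ((4:ℝ)/7) / K1 := by ring
  linarith [this, mul_assoc K1 (Real.log x) ((Real.log x) ^ ((1:ℝ)/7))]


lemma sum_r_tape {Ω : Type} [MeasureSpace Ω] {K T Nest : ℕ} (e : Execution Ω K T Nest)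
    (a : Fin K) (ω : Ω) (N : ℕ) :
    ∑ t ∈ (Finset.range N).filter (fun t => e.A t ω = a), e.r t ω
      = ∑ j ∈ Finset.range (pullCount e.A (Finset.range N) a ω), e.tape a j ω := by
  set c : ℕ → ℕ := fun t => pullCount e.A (Finset.range t) a ω with hc
  set P := (Finset.range N).filter (fun t => e.A t ω = a) with hP
  have hmem : ∀ t ∈ P, t < N ∧ e.A t ω = a := by
    intro t ht
    simpa [hP, Finset.mem_filter, Finset.mem_range] using ht
  have hlt : ∀ {u u' : ℕ}, e.A u ω = a → u < u' → c u < c u' := by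
    intro u u' ha huu
    have h1 : c u + 1 = c (u + 1) := (pullCount_range_succ e.A ha).symm
    have h2 : c (u + 1) ≤ c u' :=
      pullCount_mono e.A (Finset.range_subset_range.mpr huu) a ω
    omega
  have hinj : ∀ t ∈ P, ∀ t' ∈ P, c t = c t' → t = t' := by
    intro t ht t' ht' hcc
    rcases lt_trichotomy t t' with h | h | h
    · exact absurd hcc (Nat.ne_of_lt (hlt (hmem t ht).2 h))
    · exact h
    · exact absurd hcc.symm (Nat.ne_of_lt (hlt (hmem t' ht').2 h))
  have hcard : P.card = pullCount e.A (Finset.range N) a ω := rfl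
  have himage : P.image c = Finset.range (pullCount e.A (Finset.range N) a ω) := by
    apply Finset.eq_of_subset_of_card_le
    · intro j hj
      rcases Finset.mem_image.mp hj with ⟨u, hu, rfl⟩
      exact Finset.mem_range.mpr (hlt (hmem u hu).2 (hmem u hu).1)
    · rw [Finset.card_image_of_injOn (fun x hx y hy h => hinj x hx y hy h),
        Finset.card_range, hcard]
  calc ∑ t ∈ P, e.r t ω = ∑ t ∈ P, e.tape a (c t) ω := by
        refine Finset.sum_congr rfl fun u hu => ?_
        rw [e.r_eq u ω, (hmem u hu).2]
      _ = ∑ j ∈ P.image c, e.tape a j ω := (Finset.sum_image (f := fun j => e.tape a j ω) hinj).symm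
      _ = _ := by rw [himage]

set_option maxHeartbeats 2000000 in
/-- medium gap: assume `μ₁ ≥ μ₂` and condition on the good events
`W1–W4` of the three-level policy.  If the gap satisfies
`4·Σ_a √(log T / (σ · q a · T1)) ≤ Δ ≤ 4·Σ_a √(log T / (q a · T1))` then all
agents in the third level pull arm 1 (the best arm, index `0`). -/
theorem medium_gap (Nest Lfdp : ℕ) (q : Fin 2 → ℝ) (hq0 : ∀ a, 0 < q a) :
    ∃ T0 : ℕ, ∀ T : ℕ, T0 ≤ T →
    ∀ (Ω : Type) [MeasureSpace Ω] [IsProbabilityMeasure (volume : Measure Ω)],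
    ∀ e : Execution Ω 2 T Nest,
      -- arm 1 (index 0) is the best arm
      e.μ 1 ≤ e.μ 0 →
      ThreeLevel e.obs (sigT T) (T1of T) (T2of T) Lfdp →
      (∀ (a : Fin 2) (j : ℕ), j < sigT T * T1of T →
        ∫ ω, (pullCount e.A (Finset.Ico (j * Lfdp) ((j + 1) * Lfdp)) a ω : ℝ) = q a) →
    ∀ gtape : ℕ → Fin 2 → ℕ → Ω → ℝ,
      (∀ s < sigT T, ∀ (ω : Ω), ∀ t ∈ grp (T1of T) Lfdp s,
        e.r t ω = gtape s (e.A t ω) (idxIn e.A (grp (T1of T) Lfdp s) (e.A t ω) ω t) ω) →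
    ∀ ω : Ω,
      -- event W1 at ω: concentration of per-group pull counts
      (∀ s < sigT T, ∀ a : Fin 2,
        |(pullCount e.A (grp (T1of T) Lfdp s) a ω : ℝ) - q a * T1of T|
          ≤ (Lfdp : ℝ) * Real.sqrt (T1of T * Real.log T)) →
      -- event W2 at ω: concentration of tape window averages in the first level
      (∀ s < sigT T, ∀ a : Fin 2, ∀ τ1 τ2 : ℕ, τ1 ≤ τ2 → τ2 < T →
        |(∑ j ∈ Finset.Icc τ1 τ2, gtape s a j ω) / ((τ2 - τ1 + 1 : ℕ) : ℝ) - e.μ a|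
          ≤ Real.sqrt (2 * Real.log T / ((τ2 - τ1 + 1 : ℕ) : ℝ))) →
      -- event W3 at ω: anti-concentration, each arm has a lucky first-level group
      (∀ a : Fin 2, ∃ s < sigT T,
        e.μ a + 1 / Real.sqrt (q a * T1of T) ≤
          (∑ j ∈ Finset.range ⌊q a * (T1of T : ℝ)⌋₊, gtape s a j ω) / (⌊q a * (T1of T : ℝ)⌋₊ : ℝ) ∧
        (∑ j ∈ Finset.range ⌊q (1 - a) * (T1of T : ℝ)⌋₊, gtape s (1 - a) j ω) /
            (⌊q (1 - a) * (T1of T : ℝ)⌋₊ : ℝ)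
          ≤ e.μ (1 - a) - 1 / Real.sqrt (q (1 - a) * T1of T)) →
      -- event W4 at ω: concentration of prefix empirical means over the whole run
      (∀ (a : Fin 2) (τ : ℕ), 1 ≤ τ → τ ≤ pullCount e.A (Finset.range T) a ω →
        |(∑ j ∈ Finset.range τ, e.tape a j ω) / (τ : ℝ) - e.μ a|
          ≤ Real.sqrt (2 * Real.log T / (τ : ℝ))) →
      -- medium gap
      4 * (Real.sqrt (Real.log T / (sigT T * (q 0 * T1of T)))
            + Real.sqrt (Real.log T / (sigT T * (q 1 * T1of T))))
          ≤ e.μ 0 - e.μ 1 →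
      e.μ 0 - e.μ 1
          ≤ 4 * (Real.sqrt (Real.log T / (q 0 * T1of T))
                  + Real.sqrt (Real.log T / (q 1 * T1of T))) →
      -- all agents of the third level pull arm 1
      ∀ t : ℕ, sigT T * T1of T * Lfdp + sigT T * T2of T ≤ t → t < T → e.A t ω = 0 := by
  classical
  set qmin := min (q 0) (q 1) with hqmin_def
  have hqmin : 0 < qmin := lt_min (hq0 0) (hq0 1)
  have hqa_min : ∀ a : Fin 2, qmin ≤ q a := by
    intro a
    have fin2 : a = 0 ∨ a = 1 := by omega
    rcases fin2 with h | h <;> rw [h]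
    · exact min_le_left _ _
    · exact min_le_right _ _
  set K1 : ℝ := max ((2 * Lfdp / qmin) ^ 2) 1 with hK1_def
  have hK1 : 1 ≤ K1 := le_max_right _ _
  set M : ℝ := (2 * (Nest : ℝ) + 2) / qmin with hM_def
  have hev : ∀ᶠ x : ℝ in Filter.atTop,
      (K1 * Real.log x ≤ x ^ ((4:ℝ)/7) * (Real.log x) ^ (-(1:ℝ)/7)
        ∧ M ≤ Real.log x ∧ 1 ≤ Real.log x) := by
    filter_upwards [eventually_rpow_log (lt_of_lt_of_le one_pos hK1),
      Real.tendsto_log_atTop.eventually_ge_atTop M,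
      Real.tendsto_log_atTop.eventually_ge_atTop 1] with x h1 h2 h3
    exact ⟨h1, h2, h3⟩
  obtain ⟨T0, hT0⟩ := Filter.eventually_atTop.mp (tendsto_natCast_atTop_atTop.eventually hev)
  refine ⟨T0, ?_⟩
  intro T hT Ω _ _ e hμ hTL hq gtape hgt ω hW1 hW2 hW3 hW4 hgapL hgapU t ht3 htT
  obtain ⟨hC1, hCM, hlog1⟩ := hT0 T hT
  have hlogpos : 0 < Real.log T := lt_of_lt_of_le one_pos hlog1
  have hT1K : K1 * Real.log T ≤ (T1of T : ℝ) := le_trans hC1 (Nat.le_ceil _)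
  have hT1pos : (0:ℝ) < (T1of T : ℝ) := lt_of_lt_of_le (by nlinarith) hT1K
  have hσ : (1:ℝ) ≤ (sigT T : ℝ) := by
    have : 1 ≤ sigT T := Nat.one_le_ceil_iff.mpr (by positivity)
    exact_mod_cast this
  have hobs : e.obs t = Finset.range (sigT T * T1of T * Lfdp + sigT T * T2of T) :=
    hTL.2.2 t ht3
  have hDbarpos : ∀ a : Fin 2, 0 < (sigT T : ℝ) * (q a * (T1of T : ℝ)) := by
    intro a
    exact mul_pos (lt_of_lt_of_le one_pos hσ) (mul_pos (hq0 a) hT1pos)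
  -- per-group pull-count lower bound from W1
  have hgrp : ∀ a : Fin 2, ∀ s < sigT T,
      q a * (T1of T : ℝ) / 2 ≤ (pullCount e.A (grp (T1of T) Lfdp s) a ω : ℝ) := by
    intro a s hs
    have h1 := abs_le.mp (hW1 s hs a)
    have hsqrtT1 : (2 * Lfdp / qmin) * Real.sqrt (Real.log T)
        ≤ Real.sqrt (T1of T : ℝ) := by
      have h3 : (2 * Lfdp / qmin) ^ 2 * Real.log T ≤ (T1of T : ℝ) := by
        have := mul_le_mul_of_nonneg_right
          (le_max_left ((2 * Lfdp / qmin) ^ 2) 1) hlogpos.le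
        exact le_trans this hT1K
      calc (2 * Lfdp / qmin) * Real.sqrt (Real.log T)
          = Real.sqrt ((2 * Lfdp / qmin) ^ 2 * Real.log T) := by
            rw [Real.sqrt_mul (by positivity), Real.sqrt_sq (by positivity)]
        _ ≤ _ := Real.sqrt_le_sqrt h3
    have h2 : (Lfdp : ℝ) * Real.sqrt ((T1of T : ℝ) * Real.log T)
        ≤ q a * (T1of T : ℝ) / 2 := by
      rw [Real.sqrt_mul (le_of_lt hT1pos)]
      set sT1 := Real.sqrt (T1of T : ℝ) with hsT1
      set sL := Real.sqrt (Real.log T) with hsL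
      have hs1 : sT1 * sT1 = (T1of T : ℝ) := Real.mul_self_sqrt hT1pos.le
      have hs2 : 0 ≤ sT1 := Real.sqrt_nonneg _
      have hs3 : 0 ≤ sL := Real.sqrt_nonneg _
      have hsqrtT1' : 2 * (Lfdp : ℝ) * sL ≤ qmin * sT1 := by
        have h5 := mul_le_mul_of_nonneg_left hsqrtT1 hqmin.le
        have h6 : qmin * (2 * (Lfdp : ℝ) / qmin * sL) = 2 * (Lfdp : ℝ) * sL := by
          field_simp
        linarith [h5, h6.ge, h6.le]
      have hkey : (Lfdp : ℝ) * sT1 * sL ≤ qmin * sT1 * sT1 / 2 := by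
        have h7 := mul_le_mul_of_nonneg_left hsqrtT1' (by positivity : (0:ℝ) ≤ sT1 / 2)
        have h8 : sT1 / 2 * (2 * (Lfdp : ℝ) * sL) = (Lfdp : ℝ) * sT1 * sL := by ring
        have h9 : sT1 / 2 * (qmin * sT1) = qmin * sT1 * sT1 / 2 := by ring
        linarith
      have hqa := hqa_min a
      have h10 : qmin * sT1 * sT1 / 2 = qmin * (T1of T : ℝ) / 2 := by
        rw [mul_assoc, hs1]
      have h11 := mul_le_mul_of_nonneg_right hqa hT1pos.le
      linarith
    linarith [h1.1]
  -- aggregated pull-count lower bound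
  have hDnA : ∀ a : Fin 2,
      (sigT T : ℝ) * (q a * (T1of T : ℝ)) / 2
        ≤ (pullCount e.A (Finset.range (sigT T * T1of T * Lfdp + sigT T * T2of T)) a ω : ℝ) := by
    intro a
    have hsum := pullCount_grp_sum e.A a ω (T1of T) Lfdp (sigT T)
    have hlev : pullCount e.A (Finset.range (sigT T * T1of T * Lfdp)) a ω
        ≤ pullCount e.A (Finset.range (sigT T * T1of T * Lfdp + sigT T * T2of T)) a ω :=
      pullCount_mono e.A (Finset.range_subset_range.mpr (Nat.le_add_right _ _)) a ω
    have hcast : (sigT T : ℝ) * (q a * (T1of T : ℝ) / 2)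
        ≤ (pullCount e.A (Finset.range (sigT T * T1of T * Lfdp)) a ω : ℝ) := by
      rw [← hsum]
      push_cast
      calc (sigT T : ℝ) * (q a * (T1of T : ℝ) / 2)
          = ∑ _s ∈ Finset.range (sigT T), (q a * (T1of T : ℝ) / 2) := by
            rw [Finset.sum_const, Finset.card_range, nsmul_eq_mul]
        _ ≤ _ := Finset.sum_le_sum fun s hs => hgrp a s (Finset.mem_range.mp hs)
    have hle : (pullCount e.A (Finset.range (sigT T * T1of T * Lfdp)) a ω : ℝ)
        ≤ (pullCount e.A (Finset.range (sigT T * T1of T * Lfdp + sigT T * T2of T)) a ω : ℝ) := by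
      exact_mod_cast hlev
    calc (sigT T : ℝ) * (q a * (T1of T : ℝ)) / 2
        = (sigT T : ℝ) * (q a * (T1of T : ℝ) / 2) := by ring
      _ ≤ _ := le_trans hcast hle
  -- Dbar is large
  have hDbar_big : ∀ a : Fin 2,
      2 * (Nest : ℝ) + 2 ≤ (sigT T : ℝ) * (q a * (T1of T : ℝ)) := by
    intro a
    have hqa := hqa_min a
    have h1 : qmin * M = 2 * (Nest : ℝ) + 2 := by
      rw [hM_def]; field_simp
    have h2 : M ≤ Real.log T := hCM
    have h3 : Real.log T ≤ K1 * Real.log T := le_mul_of_one_le_left hlogpos.le hK1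
    have h4 : qmin * (T1of T : ℝ) ≤ q a * (T1of T : ℝ) :=
      mul_le_mul_of_nonneg_right hqa hT1pos.le
    have h5 : q a * (T1of T : ℝ) ≤ (sigT T : ℝ) * (q a * (T1of T : ℝ)) :=
      le_mul_of_one_le_left (mul_pos (hq0 a) hT1pos).le hσ
    nlinarith [mul_le_mul_of_nonneg_left (le_trans h2 (le_trans h3 hT1K)) hqmin.le]
  have hDnNest : ∀ a : Fin 2,
      Nest ≤ pullCount e.A (Finset.range (sigT T * T1of T * Lfdp + sigT T * T2of T)) a ω := by
    intro a
    have := le_trans (by linarith [hDbar_big a] :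
        (Nest : ℝ) + 1 ≤ (sigT T : ℝ) * (q a * (T1of T : ℝ)) / 2) (hDnA a)
    have h2 : (Nest : ℝ) ≤ (pullCount e.A
        (Finset.range (sigT T * T1of T * Lfdp + sigT T * T2of T)) a ω : ℝ) := by linarith
    exact_mod_cast h2
  have hDn1 : ∀ a : Fin 2,
      1 ≤ pullCount e.A (Finset.range (sigT T * T1of T * Lfdp + sigT T * T2of T)) a ω := by
    intro a
    have := le_trans (by linarith [hDbar_big a] :
        (1 : ℝ) ≤ (sigT T : ℝ) * (q a * (T1of T : ℝ)) / 2) (hDnA a)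
    exact_mod_cast this
  have hDnpos : ∀ a : Fin 2, (0:ℝ) < (pullCount e.A
      (Finset.range (sigT T * T1of T * Lfdp + sigT T * T2of T)) a ω : ℝ) := by
    intro a
    have := hDn1 a
    exact_mod_cast Nat.lt_of_lt_of_le Nat.zero_lt_one this
  -- W4 applied to the level-1+2 prefix
  have hW4' : ∀ a : Fin 2,
      |(∑ j ∈ Finset.range (pullCount e.A
            (Finset.range (sigT T * T1of T * Lfdp + sigT T * T2of T)) a ω), e.tape a j ω)
          / ((pullCount e.A (Finset.range (sigT T * T1of T * Lfdp + sigT T * T2of T)) a ω : ℕ) : ℝ)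
          - e.μ a|
        ≤ Real.sqrt (2 * Real.log T / ((pullCount e.A
            (Finset.range (sigT T * T1of T * Lfdp + sigT T * T2of T)) a ω : ℕ) : ℝ)) := by
    intro a
    apply hW4 a _ (hDn1 a)
    exact pullCount_mono e.A
      (Finset.range_subset_range.mpr (Nat.le_of_lt (lt_of_le_of_lt ht3 htT))) a ω
  -- empirical mean equals tape prefix mean
  have hemp : ∀ a : Fin 2, empMean e.A e.r (e.obs t) a ω
      = (∑ j ∈ Finset.range (pullCount e.A
            (Finset.range (sigT T * T1of T * Lfdp + sigT T * T2of T)) a ω), e.tape a j ω)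
        / ((pullCount e.A (Finset.range (sigT T * T1of T * Lfdp + sigT T * T2of T)) a ω : ℕ) : ℝ) := by
    intro a
    rw [hobs]
    unfold empMean
    rw [sum_r_tape]
  -- estimate error
  have hest : ∀ a : Fin 2,
      |e.est t a ω - (∑ j ∈ Finset.range (pullCount e.A
            (Finset.range (sigT T * T1of T * Lfdp + sigT T * T2of T)) a ω), e.tape a j ω)
          / ((pullCount e.A (Finset.range (sigT T * T1of T * Lfdp + sigT T * T2of T)) a ω : ℕ) : ℝ)|
        < (1/16 : ℝ) / Real.sqrt ((pullCount e.A
            (Finset.range (sigT T * T1of T * Lfdp + sigT T * T2of T)) a ω : ℕ) : ℝ) := by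
    intro a
    have h := e.est_close t a ω (by rw [hobs]; exact hDnNest a)
    rw [hobs] at h
    rw [← hemp a, hobs]
    exact h
  -- the two sqrt bounds
  have hsqrt1 : ∀ a : Fin 2,
      Real.sqrt (2 * Real.log T / ((pullCount e.A
          (Finset.range (sigT T * T1of T * Lfdp + sigT T * T2of T)) a ω : ℕ) : ℝ))
        ≤ 2 * Real.sqrt (Real.log T / ((sigT T : ℝ) * (q a * (T1of T : ℝ)))) := by
    intro a
    have h1 : 2 * Real.log T / ((pullCount e.A
          (Finset.range (sigT T * T1of T * Lfdp + sigT T * T2of T)) a ω : ℕ) : ℝ)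
        ≤ 2 * Real.log T / ((sigT T : ℝ) * (q a * (T1of T : ℝ)) / 2) :=
      div_le_div_of_nonneg_left (by positivity) (by linarith [hDbarpos a]) (hDnA a)
    have h2 : 2 * Real.log T / ((sigT T : ℝ) * (q a * (T1of T : ℝ)) / 2)
        = 2 ^ 2 * (Real.log T / ((sigT T : ℝ) * (q a * (T1of T : ℝ)))) := by
      field_simp
    calc Real.sqrt _ ≤ Real.sqrt (2 ^ 2 * (Real.log T / ((sigT T : ℝ) * (q a * (T1of T : ℝ))))) := by
          apply Real.sqrt_le_sqrt
          rw [← h2]; exact h1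
      _ = 2 * Real.sqrt (Real.log T / ((sigT T : ℝ) * (q a * (T1of T : ℝ)))) := by
          rw [Real.sqrt_mul (by norm_num), Real.sqrt_sq (by norm_num)]
  have hsqrt2 : ∀ a : Fin 2,
      (1/16 : ℝ) / Real.sqrt ((pullCount e.A
          (Finset.range (sigT T * T1of T * Lfdp + sigT T * T2of T)) a ω : ℕ) : ℝ)
        ≤ Real.sqrt (Real.log T / ((sigT T : ℝ) * (q a * (T1of T : ℝ)))) := by
    intro a
    have h0' : 0 < Real.sqrt ((sigT T : ℝ) * (q a * (T1of T : ℝ)) / 2) :=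
      Real.sqrt_pos.mpr (by linarith [hDbarpos a])
    have h0 : Real.sqrt ((sigT T : ℝ) * (q a * (T1of T : ℝ)) / 2)
        ≤ Real.sqrt ((pullCount e.A
          (Finset.range (sigT T * T1of T * Lfdp + sigT T * T2of T)) a ω : ℕ) : ℝ) :=
      Real.sqrt_le_sqrt (hDnA a)
    have h1 : (1/16 : ℝ) / Real.sqrt ((pullCount e.A
          (Finset.range (sigT T * T1of T * Lfdp + sigT T * T2of T)) a ω : ℕ) : ℝ)
        ≤ (1/16 : ℝ) / Real.sqrt ((sigT T : ℝ) * (q a * (T1of T : ℝ)) / 2) :=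
      div_le_div_of_nonneg_left (by norm_num) h0' h0
    have hprod : Real.sqrt (Real.log T / ((sigT T : ℝ) * (q a * (T1of T : ℝ))))
        * Real.sqrt ((sigT T : ℝ) * (q a * (T1of T : ℝ)) / 2)
        = Real.sqrt (Real.log T / 2) := by
      rw [← Real.sqrt_mul (div_nonneg hlogpos.le (hDbarpos a).le)]
      congr 1
      have hDne : (sigT T : ℝ) * (q a * (T1of T : ℝ)) ≠ 0 := (hDbarpos a).ne'
      field_simp
      exact div_self (hq0 a).ne'
    have h2 : (1/16 : ℝ) / Real.sqrt ((sigT T : ℝ) * (q a * (T1of T : ℝ)) / 2)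
        ≤ Real.sqrt (Real.log T / ((sigT T : ℝ) * (q a * (T1of T : ℝ)))) := by
      rw [div_le_iff₀ h0', hprod]
      have h3 : Real.sqrt (1/2 : ℝ) ≤ Real.sqrt (Real.log T / 2) :=
        Real.sqrt_le_sqrt (by linarith)
      have h4 : (1/16 : ℝ) ≤ Real.sqrt (1/2 : ℝ) := by
        rw [show (1/16 : ℝ) = Real.sqrt ((1/16) ^ 2) from (Real.sqrt_sq (by norm_num)).symm]
        exact Real.sqrt_le_sqrt (by norm_num)
      linarith
    linarith
  -- key estimate bound
  have key : ∀ a : Fin 2, |e.est t a ω - e.μ a|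
      < 3 * Real.sqrt (Real.log T / ((sigT T : ℝ) * (q a * (T1of T : ℝ)))) := by
    intro a
    have h1 := hest a
    have h2 := hW4' a
    have h3 := hsqrt1 a
    have h4 := hsqrt2 a
    have h5 := abs_sub_le (e.est t a ω)
      ((∑ j ∈ Finset.range (pullCount e.A
            (Finset.range (sigT T * T1of T * Lfdp + sigT T * T2of T)) a ω), e.tape a j ω)
        / ((pullCount e.A (Finset.range (sigT T * T1of T * Lfdp + sigT T * T2of T)) a ω : ℕ) : ℝ))
      (e.μ a)
    linarith
  have k0 := abs_lt.mp (key 0)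
  have k1 := abs_lt.mp (key 1)
  have horder : e.est t 1 ω < e.est t 0 ω := by
    have hE0 : 0 ≤ Real.sqrt (Real.log T / ((sigT T : ℝ) * (q 0 * (T1of T : ℝ)))) :=
      Real.sqrt_nonneg _
    have hE1 : 0 ≤ Real.sqrt (Real.log T / ((sigT T : ℝ) * (q 1 * (T1of T : ℝ)))) :=
      Real.sqrt_nonneg _
    linarith [hgapL, k0.1, k0.2, k1.1, k1.2]
  have fin2 : ∀ x : Fin 2, x = 0 ∨ x = 1 := by decide
  rcases fin2 (e.A t ω) with h | h
  · exact h
  · exfalso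
    have hm := e.A_max t ω 0
    rw [h] at hm
    exact absurd hm (not_le.mpr horder)


end IncExp
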